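/- Let Q be a cube in ℝⁿ, η ∈ (0,1), and let F ⊂ D(Q) be an η-sparse family of dyadic subcubes of Q. Then for every α > 0, the measure of the set {x ∈ Q : ∑_{P ∈ F} χ_P(x) > α} is at most (1/(1-η)) · e^{-α·log(1/(1-η))} · |Q|. -/

import Mathlib

open MeasureTheory ENNReal Filter

/-- An axis-parallel cube in `ℝⁿ`, given by its lower-left corner and (positive) side length. -/
structure DyCube (n : ℕ) where
  corner : Fin n → ℝ
  side : ℝ
  side_pos : 0 < side

namespace DyCube

/-- The set of points of a cube (half-open, so that dyadic children tile it exactly). -/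
def set {n : ℕ} (Q : DyCube n) : Set (Fin n → ℝ) :=
  Set.univ.pi fun i => Set.Ico (Q.corner i) (Q.corner i + Q.side)

/-- `P.IsDyadicSub Q` : `P` is a dyadic subcube of `Q`, obtained by `k` successive
dyadic subdivisions of `Q`. -/
def IsDyadicSub {n : ℕ} (P Q : DyCube n) : Prop :=
  ∃ k : ℕ, ∃ m : Fin n → ℕ, (∀ i, m i < 2 ^ k) ∧ P.side = Q.side / 2 ^ k ∧
    ∀ i, P.corner i = Q.corner i + m i * (Q.side / 2 ^ k)

end DyCube

/-- `Ω_k`, the union of the cubes of the `k`-th generation of a family. -/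
def genUnion {n : ℕ} (F : ℕ → Set (DyCube n)) (k : ℕ) : Set (Fin n → ℝ) :=
  ⋃ P ∈ F k, P.set

/-- A contracting family of dyadic subcubes of `Q`: generations `F k` of pairwise disjoint
dyadic subcubes, starting from `F 0 = {Q}`, with decreasing unions whose measures tend to `0`. -/
structure ContractingFamily {n : ℕ} (Q : DyCube n) (F : ℕ → Set (DyCube n)) : Prop where
  zero : F 0 = {Q}
  dyadic : ∀ k, ∀ P ∈ F k, P.IsDyadicSub Q
  disj : ∀ k, (F k).PairwiseDisjoint DyCube.set
  nested : ∀ k, genUnion F (k + 1) ⊆ genUnion F k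
  vanish : Tendsto (fun k => volume (genUnion F k)) atTop (nhds 0)

/-- An `η`-sparse family: a contracting family such that each cube `P ∈ F k` satisfies
`|E_P| ≥ η |P|`, where `E_P = P \ Ω_{k+1}`. -/
def IsSparseFamily {n : ℕ} (η : ℝ) (Q : DyCube n) (F : ℕ → Set (DyCube n)) : Prop :=
  ContractingFamily Q F ∧
    ∀ k, ∀ P ∈ F k, ENNReal.ofReal η * volume P.set ≤ volume (P.set \ genUnion F (k + 1))

lemma DyCube.ext' {n : ℕ} {P P' : DyCube n} (hc : P.corner = P'.corner)
    (hs : P.side = P'.side) : P = P' := by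
  cases P; cases P'; simp_all

lemma measurableSet_dySet {n : ℕ} (P : DyCube n) : MeasurableSet P.set :=
  MeasurableSet.univ_pi fun _ => measurableSet_Ico

lemma vol_dySet_ne_top {n : ℕ} (P : DyCube n) : volume P.set ≠ ⊤ := by
  rw [DyCube.set, volume_pi_pi]
  exact (ENNReal.prod_lt_top fun i _ => by simp [Real.volume_Ico]).ne

lemma countable_dyadic {n : ℕ} (Q : DyCube n) :
    {P : DyCube n | P.IsDyadicSub Q}.Countable := by
  rw [Set.countable_coe_iff.symm]
  have hch : ∀ P : {P : DyCube n // P.IsDyadicSub Q}, ∃ km : ℕ × (Fin n → ℕ),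
      (P : DyCube n).side = Q.side / 2 ^ km.1 ∧
      ∀ i, (P : DyCube n).corner i = Q.corner i + km.2 i * (Q.side / 2 ^ km.1) := by
    rintro ⟨P, k, m, _, hs, hc⟩
    exact ⟨(k, m), hs, hc⟩
  choose f hf1 hf2 using hch
  have hinj : Function.Injective f := by
    intro a b hab
    apply Subtype.ext
    apply DyCube.ext'
    · funext i
      rw [hf2 a i, hf2 b i, hab]
    · rw [hf1 a, hf1 b, hab]
  exact hinj.countable

lemma vol_genUnion_succ {n : ℕ} {Q : DyCube n} {η : ℝ} (hη : η ∈ Set.Ioo (0 : ℝ) 1)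
    {F : ℕ → Set (DyCube n)} (hF : IsSparseFamily η Q F) (k : ℕ) :
    volume (genUnion F (k + 1)) ≤ ENNReal.ofReal (1 - η) * volume (genUnion F k) := by
  obtain ⟨hC, hsp⟩ := hF
  have hcnt : (F k).Countable := (countable_dyadic Q).mono (fun P hP => hC.dyadic k P hP)
  have hcnt' : (F (k + 1)).Countable :=
    (countable_dyadic Q).mono (fun P hP => hC.dyadic _ P hP)
  have hΩ' : MeasurableSet (genUnion F (k + 1)) :=
    MeasurableSet.biUnion hcnt' (fun P _ => measurableSet_dySet P)
  have hsub : genUnion F (k + 1) ⊆ ⋃ P ∈ F k, (genUnion F (k + 1) ∩ P.set) := by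
    intro x hx
    obtain ⟨P, hP, hxP⟩ := Set.mem_iUnion₂.mp (hC.nested k hx)
    exact Set.mem_iUnion₂.mpr ⟨P, hP, hx, hxP⟩
  calc volume (genUnion F (k + 1))
      ≤ ∑' P : F k, volume (genUnion F (k + 1) ∩ (P : DyCube n).set) :=
        (measure_mono hsub).trans (measure_biUnion_le _ hcnt _)
    _ ≤ ∑' P : F k, ENNReal.ofReal (1 - η) * volume (P : DyCube n).set := by
        apply ENNReal.tsum_le_tsum
        rintro ⟨P, hP⟩
        have h1 : volume (P.set ∩ genUnion F (k + 1)) + volume (P.set \ genUnion F (k + 1))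
            = volume P.set := measure_inter_add_diff _ hΩ'
        have h2 := hsp k P hP
        have h3 : ENNReal.ofReal (1 - η) * volume P.set + ENNReal.ofReal η * volume P.set
            = volume P.set := by
          rw [← add_mul, ← ENNReal.ofReal_add (by linarith [hη.2]) hη.1.le]
          norm_num
        have hfin : volume (P.set \ genUnion F (k + 1)) ≠ ⊤ :=
          fun h => vol_dySet_ne_top P (top_le_iff.mp (h ▸ measure_mono Set.diff_subset))
        have key : volume (P.set ∩ genUnion F (k + 1)) + volume (P.set \ genUnion F (k + 1))
            ≤ ENNReal.ofReal (1 - η) * volume P.set + volume (P.set \ genUnion F (k + 1)) := by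
          calc volume (P.set ∩ genUnion F (k + 1)) + volume (P.set \ genUnion F (k + 1))
              = volume P.set := h1
            _ = ENNReal.ofReal (1 - η) * volume P.set + ENNReal.ofReal η * volume P.set := h3.symm
            _ ≤ _ := add_le_add_right h2 _
        rw [Set.inter_comm]
        exact (ENNReal.add_le_add_iff_right hfin).mp key
    _ = ENNReal.ofReal (1 - η) * volume (genUnion F k) := by
        rw [ENNReal.tsum_mul_left, genUnion,
          measure_biUnion hcnt (hC.disj k) (fun P hP => measurableSet_dySet P)]

lemma vol_genUnion_le {n : ℕ} {Q : DyCube n} {η : ℝ} (hη : η ∈ Set.Ioo (0 : ℝ) 1)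
    {F : ℕ → Set (DyCube n)} (hF : IsSparseFamily η Q F) (k : ℕ) :
    volume (genUnion F k) ≤ ENNReal.ofReal ((1 - η) ^ k) * volume Q.set := by
  induction k with
  | zero => simp [genUnion, hF.1.zero]
  | succ k ih =>
    calc volume (genUnion F (k + 1))
        ≤ ENNReal.ofReal (1 - η) * volume (genUnion F k) := vol_genUnion_succ hη hF k
      _ ≤ ENNReal.ofReal (1 - η) * (ENNReal.ofReal ((1 - η) ^ k) * volume Q.set) :=
          mul_le_mul_right ih _
      _ = ENNReal.ofReal ((1 - η) ^ (k + 1)) * volume Q.set := by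
          rw [← mul_assoc, ← ENNReal.ofReal_mul (by linarith [hη.2]), pow_succ]
          ring_nf

/-- Distribution estimate for the overlap function of an `η`-sparse family:
`|{x ∈ Q : ∑_{P ∈ F} χ_P(x) > α}| ≤ (1/(1-η)) e^{-α log(1/(1-η))} |Q|`. -/
theorem stmt2 {n : ℕ} (Q : DyCube n) (η : ℝ) (hη : η ∈ Set.Ioo (0 : ℝ) 1)
    (F : ℕ → Set (DyCube n)) (hF : IsSparseFamily η Q F) (α : ℝ) (hα : 0 < α) :
    volume {x | x ∈ Q.set ∧ ENNReal.ofReal α <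
        ∑' k : ℕ, ∑' P : F k, (P : DyCube n).set.indicator (fun _ => (1 : ℝ≥0∞)) x} ≤
      ENNReal.ofReal ((1 - η)⁻¹ * Real.exp (-(Real.log (1 - η)⁻¹) * α)) * volume Q.set := by
  set N : ℕ := ⌊α⌋₊ with hN
  have hx1 : (0 : ℝ) < 1 - η := by linarith [hη.2]
  have hx2 : (1 : ℝ) - η ≤ 1 := by linarith [hη.1]
  -- the superlevel set is contained in Ω_N
  have hsubset : {x | x ∈ Q.set ∧ ENNReal.ofReal α <
      ∑' k : ℕ, ∑' P : F k, (P : DyCube n).set.indicator (fun _ => (1 : ℝ≥0∞)) x}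
      ⊆ genUnion F N := by
    rintro x ⟨-, hx⟩
    by_contra hxN
    have hanti : Antitone (genUnion F) := antitone_nat_of_succ_le hF.1.nested
    have hg : ∀ k, (∑' P : F k, (P : DyCube n).set.indicator (fun _ => (1 : ℝ≥0∞)) x)
        ≤ (genUnion F k).indicator (fun _ => (1 : ℝ≥0∞)) x := by
      intro k
      by_cases hxk : x ∈ genUnion F k
      · obtain ⟨P₀, hP₀, hxP₀⟩ := Set.mem_iUnion₂.mp hxk
        rw [Set.indicator_of_mem hxk]
        rw [tsum_eq_single (⟨P₀, hP₀⟩ : F k) ?_]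
        · simp [Set.indicator_of_mem hxP₀]
        · rintro ⟨P, hP⟩ hne
          refine Set.indicator_of_notMem (fun hxP => hne ?_) _
          exact Subtype.ext ((hF.1.disj k).elim hP hP₀
            (Set.not_disjoint_iff.mpr ⟨x, hxP, hxP₀⟩))
      · rw [Set.indicator_of_notMem hxk]
        refine le_of_eq (ENNReal.tsum_eq_zero.mpr ?_)
        rintro ⟨P, hP⟩
        exact Set.indicator_of_notMem
          (fun hxP => hxk (Set.mem_iUnion₂.mpr ⟨P, hP, hxP⟩)) _
    have hS : (∑' k : ℕ, ∑' P : F k, (P : DyCube n).set.indicator (fun _ => (1 : ℝ≥0∞)) x)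
        ≤ (N : ℝ≥0∞) := by
      calc (∑' k : ℕ, ∑' P : F k, (P : DyCube n).set.indicator (fun _ => (1 : ℝ≥0∞)) x)
          ≤ ∑' k : ℕ, (genUnion F k).indicator (fun _ => (1 : ℝ≥0∞)) x :=
            ENNReal.tsum_le_tsum hg
        _ = ∑ k ∈ Finset.range N, (genUnion F k).indicator (fun _ => (1 : ℝ≥0∞)) x := by
            refine tsum_eq_sum (fun k hk => ?_)
            refine Set.indicator_of_notMem (fun h => hxN (hanti ?_ h)) _
            simpa using hk
        _ ≤ ∑ k ∈ Finset.range N, 1 :=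
            Finset.sum_le_sum (fun k _ => Set.indicator_apply_le (fun _ => le_rfl))
        _ = (N : ℝ≥0∞) := by simp
    have hlt : ENNReal.ofReal α < (N : ℝ≥0∞) := lt_of_lt_of_le hx hS
    rw [show ((N : ℝ≥0∞)) = ENNReal.ofReal (N : ℝ) by simp] at hlt
    have : α < (N : ℝ) := (ENNReal.ofReal_lt_ofReal_iff_of_nonneg hα.le).mp hlt
    exact absurd this (not_lt.mpr (Nat.floor_le hα.le))
  -- identify the RHS constant
  have hconst : (1 - η)⁻¹ * Real.exp (-(Real.log (1 - η)⁻¹) * α) = (1 - η) ^ (α - 1) := by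
    rw [Real.log_inv, neg_neg, mul_comm (Real.log (1 - η)) α]
    rw [Real.rpow_sub hx1, Real.rpow_one, Real.rpow_def_of_pos hx1, mul_comm α]
    ring
  have hpow : (1 - η) ^ N ≤ (1 - η) ^ (α - 1) := by
    rw [← Real.rpow_natCast (1 - η) N]
    exact Real.rpow_le_rpow_of_exponent_ge hx1 hx2
      (by linarith [Nat.lt_floor_add_one α])
  calc volume {x | x ∈ Q.set ∧ ENNReal.ofReal α <
        ∑' k : ℕ, ∑' P : F k, (P : DyCube n).set.indicator (fun _ => (1 : ℝ≥0∞)) x}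
      ≤ volume (genUnion F N) := measure_mono hsubset
    _ ≤ ENNReal.ofReal ((1 - η) ^ N) * volume Q.set := vol_genUnion_le hη hF N
    _ ≤ ENNReal.ofReal ((1 - η)⁻¹ * Real.exp (-(Real.log (1 - η)⁻¹) * α)) * volume Q.set := by
        rw [hconst]
        exact mul_le_mul_left (ENNReal.ofReal_le_ofReal hpow) _
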